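/- arXiv:0911.4040 — 5 statements merged into one kernel-verified Lean document; each statement's English description precedes it below -/
import Mathlib

section
/- For integers p ≥ 5 and h ≥ 4, the polynomial P(X) = X³ − ((p−3)(h−1)+1)X² − ((p−2)(h−1)−2)X − (h−3) has a real root α₁ with −1 < α₁ < −1/2 and a real root α₂ with −1/2 < α₂ < 0. -/
/-- For integers `p ≥ 5` and `h ≥ 4`, the polynomial
`P(X) = X³ − ((p−3)(h−1)+1)X² − ((p−2)(h−1)−2)X − (h−3)` has a real root `α₁` with
`−1 < α₁ < −1/2` and a real root `α₂` with `−1/2 < α₂ < 0`. -/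
theorem splitting_odd_small_roots (p h : ℤ) (hp : 5 ≤ p) (hh : 4 ≤ h)
    (P : ℝ → ℝ)
    (hP : ∀ x : ℝ, P x =
      x ^ 3 - (((p : ℝ) - 3) * ((h : ℝ) - 1) + 1) * x ^ 2
        - (((p : ℝ) - 2) * ((h : ℝ) - 1) - 2) * x - ((h : ℝ) - 3)) :
    (∃ α₁ : ℝ, P α₁ = 0 ∧ -1 < α₁ ∧ α₁ < -1 / 2) ∧
      (∃ α₂ : ℝ, P α₂ = 0 ∧ -1 / 2 < α₂ ∧ α₂ < 0) := by
  have hp' : (5 : ℝ) ≤ (p : ℝ) := by exact_mod_cast hp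
  have hh' : (4 : ℝ) ≤ (h : ℝ) := by exact_mod_cast hh
  have hcont : Continuous P := by
    have : P = fun x : ℝ =>
        x ^ 3 - (((p : ℝ) - 3) * ((h : ℝ) - 1) + 1) * x ^ 2
          - (((p : ℝ) - 2) * ((h : ℝ) - 1) - 2) * x - ((h : ℝ) - 3) := funext hP
    rw [this]; continuity
  have hPm1 : P (-1) = -2 := by rw [hP]; ring
  have hPhalf : (0 : ℝ) < P (-1 / 2) := by
    have : P (-1 / 2) = (2 * (p : ℝ) * (h : ℝ) - 2 * p - 10 * h + 15) / 8 := by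
      rw [hP]; ring
    rw [this]
    have h1 : 2 * (p : ℝ) * (h : ℝ) - 2 * p - 10 * h + 15
        = 2 * (p : ℝ) * ((h : ℝ) - 1) - 10 * h + 15 := by ring
    nlinarith [mul_le_mul hp' (by linarith : (3 : ℝ) ≤ (h : ℝ) - 1) (by linarith) (by linarith)]
  have hP0 : P 0 < 0 := by
    rw [hP]; nlinarith
  constructor
  · have := intermediate_value_Ioo (by norm_num : (-1 : ℝ) ≤ -1 / 2) hcont.continuousOn
    have hmem : (0 : ℝ) ∈ Set.Ioo (P (-1)) (P (-1 / 2)) := by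
      rw [hPm1]; constructor <;> linarith
    obtain ⟨x, hx, hx0⟩ := this hmem
    exact ⟨x, hx0, hx.1, hx.2⟩
  · have := intermediate_value_Ioo' (by norm_num : (-1 / 2 : ℝ) ≤ 0) hcont.continuousOn
    have hmem : (0 : ℝ) ∈ Set.Ioo (P 0) (P (-1 / 2)) := ⟨hP0, hPhalf⟩
    obtain ⟨x, hx, hx0⟩ := this hmem
    exact ⟨x, hx0, hx.1, hx.2⟩
end

section
/- For integers p ≥ 5 and h ≥ 4, the polynomial P(X) = X³ − ((p−3)(h−1)+1)X² − ((p−2)(h−1)−2)X − (h−3) has three real roots α₁, α₂, β with |α₁| < 1, |α₂| < 1 and β > 1; that is, P is a Pisot polynomial. -/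
/-- For integers `p ≥ 5` and `h ≥ 4`, the polynomial
`P(X) = X³ − ((p−3)(h−1)+1)X² − ((p−2)(h−1)−2)X − (h−3)` has three real roots
`α₁, α₂, β` with `|α₁| < 1`, `|α₂| < 1` and `β > 1`; that is, `P` is a Pisot polynomial. -/
theorem splitting_odd_pisot (p h : ℤ) (hp : 5 ≤ p) (hh : 4 ≤ h)
    (P : ℝ → ℝ)
    (hP : ∀ x : ℝ, P x =
      x ^ 3 - (((p : ℝ) - 3) * ((h : ℝ) - 1) + 1) * x ^ 2
        - (((p : ℝ) - 2) * ((h : ℝ) - 1) - 2) * x - ((h : ℝ) - 3)) :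
    ∃ α₁ α₂ β : ℝ, (∀ x : ℝ, P x = (x - α₁) * (x - α₂) * (x - β)) ∧
      |α₁| < 1 ∧ |α₂| < 1 ∧ 1 < β := by
  have hp' : (5:ℝ) ≤ (p:ℝ) := by exact_mod_cast hp
  have hh' : (4:ℝ) ≤ (h:ℝ) := by exact_mod_cast hh
  set A : ℝ := ((p:ℝ) - 3) * ((h:ℝ) - 1) + 1 with hA
  set B : ℝ := ((p:ℝ) - 2) * ((h:ℝ) - 1) - 2 with hB
  set C : ℝ := (h:ℝ) - 3 with hC
  have hA7 : (7:ℝ) ≤ A := by nlinarith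
  have hB7 : (7:ℝ) ≤ B := by nlinarith
  have hC1 : (1:ℝ) ≤ C := by nlinarith
  have hPfun : P = fun x => x ^ 3 - A * x ^ 2 - B * x - C := funext hP
  have hcont : Continuous P := by rw [hPfun]; continuity
  -- sign values
  have hPm1 : P (-1) < 0 := by rw [hP]; nlinarith
  have hPhalf : 0 < P (-1/2) := by rw [hP]; nlinarith
  have hP0 : P 0 < 0 := by rw [hP]; nlinarith
  have hP1 : P 1 < 0 := by rw [hP]; nlinarith
  set M : ℝ := A + B + C + 1 with hM
  have hM1 : (1:ℝ) < M := by nlinarith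
  have hPM : 0 < P M := by
    rw [hP]
    nlinarith [sq_nonneg M, mul_pos (by nlinarith : (0:ℝ) < M) (by nlinarith : (0:ℝ) < M)]
  -- roots by IVT
  obtain ⟨α₁, hα₁mem, hα₁⟩ := intermediate_value_Ioo (by norm_num : (-1:ℝ) ≤ -1/2)
    hcont.continuousOn ⟨hPm1, hPhalf⟩
  obtain ⟨α₂, hα₂mem, hα₂⟩ := intermediate_value_Ioo' (by norm_num : (-1/2:ℝ) ≤ 0)
    hcont.continuousOn ⟨hP0, hPhalf⟩
  obtain ⟨β, hβmem, hβ⟩ := intermediate_value_Ioo (le_of_lt hM1)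
    hcont.continuousOn ⟨hP1, hPM⟩
  obtain ⟨hα₁l, hα₁r⟩ := hα₁mem
  obtain ⟨hα₂l, hα₂r⟩ := hα₂mem
  obtain ⟨hβl, hβr⟩ := hβmem
  have d12 : α₁ ≠ α₂ := ne_of_lt (lt_trans hα₁r hα₂l)
  have d13 : α₁ ≠ β := ne_of_lt (by linarith)
  have d23 : α₂ ≠ β := ne_of_lt (by linarith)
  have e1 : α₁ ^ 3 - A * α₁ ^ 2 - B * α₁ - C = 0 := by rw [← hP]; exact hα₁
  have e2 : α₂ ^ 3 - A * α₂ ^ 2 - B * α₂ - C = 0 := by rw [← hP]; exact hα₂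
  have e3 : β ^ 3 - A * β ^ 2 - B * β - C = 0 := by rw [← hP]; exact hβ
  have q12 : α₁ ^ 2 + α₁ * α₂ + α₂ ^ 2 - A * (α₁ + α₂) - B = 0 := by
    have hne : α₁ - α₂ ≠ 0 := sub_ne_zero.mpr d12
    apply mul_left_cancel₀ hne
    rw [mul_zero]; linear_combination e1 - e2
  have q13 : α₁ ^ 2 + α₁ * β + β ^ 2 - A * (α₁ + β) - B = 0 := by
    have hne : α₁ - β ≠ 0 := sub_ne_zero.mpr d13
    apply mul_left_cancel₀ hne
    rw [mul_zero]; linear_combination e1 - e3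
  have sA : A = α₁ + α₂ + β := by
    have hne : α₂ - β ≠ 0 := sub_ne_zero.mpr d23
    have h0 : (α₂ - β) * (α₁ + α₂ + β - A) = (α₂ - β) * 0 := by
      rw [mul_zero]; linear_combination q12 - q13
    have := mul_left_cancel₀ hne h0
    linarith [this]
  have sB : B = -(α₁ * α₂ + α₁ * β + α₂ * β) := by
    linear_combination -q12 - (α₁ + α₂) * sA
  have sC : C = α₁ * α₂ * β := by
    linear_combination -e1 - α₁ ^ 2 * sA - α₁ * sB
  refine ⟨α₁, α₂, β, ?_, ?_, ?_, hβl⟩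
  · intro x
    rw [hP x]
    linear_combination (-(x^2)) * sA + (-x) * sB + (-1) * sC
  · rw [abs_lt]; constructor <;> linarith
  · rw [abs_lt]; constructor <;> linarith
end

section
/- For an integer h ≥ 3, every non-real complex root z of the polynomial P(X) = X³ − hX² − 2(h−2)X − (h−3) satisfies |z|² < 1 − 3/h, and in particular |z| < 1. -/
/-- For an integer `h ≥ 3`, every non-real complex root `z` of the polynomial
`P(X) = X³ − hX² − 2(h−2)X − (h−3)` satisfies `|z|² < 1 − 3/h`, and in particular
`|z| < 1`. -/
theorem splitting_odd_p_eq_four_complex_roots (h : ℤ) (hh : 3 ≤ h) (z : ℂ)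
    (hz : z ^ 3 - (h : ℂ) * z ^ 2 - 2 * ((h : ℂ) - 2) * z - ((h : ℂ) - 3) = 0)
    (him : z.im ≠ 0) :
    ‖z‖ ^ 2 < 1 - 3 / (h : ℝ) ∧ ‖z‖ < 1 := by
  have hR : (3:ℝ) ≤ (h:ℝ) := by exact_mod_cast hh
  set x := z.re with hxd
  set y := z.im with hyd
  have hre := congrArg Complex.re hz
  have himm := congrArg Complex.im hz
  simp only [pow_succ, pow_zero, one_mul, Complex.mul_re, Complex.mul_im, Complex.sub_re,
    Complex.sub_im, Complex.ofReal_re, Complex.ofReal_im, Complex.intCast_re, Complex.intCast_im,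
    Complex.zero_re, Complex.zero_im, Complex.one_re,
    Complex.one_im, Complex.re_ofNat, Complex.im_ofNat] at hre himm
  ring_nf at hre himm
  have hy2 : 0 < y ^ 2 := by positivity
  have E1 : y ^ 2 = 3 * x ^ 2 - 2 * (h:ℝ) * x - 2 * (h:ℝ) + 4 := by
    have h2 : y * (3 * x ^ 2 - 2 * (h:ℝ) * x - 2 * (h:ℝ) + 4 - y ^ 2) = 0 := by
      linear_combination himm
    rcases mul_eq_zero.mp h2 with h3 | h3
    · exact absurd h3 him
    · linarith
  have P : (x ^ 2 + y ^ 2) * ((h:ℝ) - 2 * x) = (h:ℝ) - 3 := by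
    linear_combination hre + x * E1
  have hm : 0 < x ^ 2 + y ^ 2 := by positivity
  have hxneg : x < 0 := by
    by_contra hx0
    push_neg at hx0
    nlinarith [mul_nonneg hx0 hx0, mul_nonneg (mul_nonneg hx0 hx0) hx0,
      mul_pos hy2 hm, sq_nonneg ((h:ℝ) - 2*x), mul_nonneg hx0 hy2.le,
      mul_nonneg hx0 (sq_nonneg ((h:ℝ) - 2*x))]
  have key : (x ^ 2 + y ^ 2) * (h:ℝ) < (h:ℝ) - 3 := by
    have h2 : 0 < (x ^ 2 + y ^ 2) * (-x) := mul_pos hm (by linarith)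
    nlinarith [P]
  have hhpos : (0:ℝ) < (h:ℝ) := by linarith
  have habs : ‖z‖ ^ 2 = x ^ 2 + y ^ 2 := by
    rw [Complex.sq_norm, Complex.normSq_apply]; ring
  have hfrac : (1:ℝ) - 3 / (h:ℝ) = ((h:ℝ) - 3) / (h:ℝ) := by field_simp
  have h1 : ‖z‖ ^ 2 < 1 - 3 / (h:ℝ) := by
    rw [habs, hfrac, lt_div_iff₀ hhpos]; exact key
  refine ⟨h1, ?_⟩
  have h3 : (3:ℝ) / (h:ℝ) > 0 := by positivity
  nlinarith [norm_nonneg z, h1]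
end

section
/- For integers p ≥ 4 and q > 7, the polynomial Q(X) = X² − ((p−3)(q−3)+1)X − (q−7) satisfies Q((p−3)(q−3)) = −(p−3)(q−3) − q + 7 < 0, hence has two real roots α and β with β > (p−3)(q−3) > 1 and |α| < 1/(p−3) ≤ 1; that is, Q is a Pisot polynomial. -/
/-- For integers `p ≥ 4` and `q > 7`, the polynomial
`Q(X) = X² − ((p−3)(q−3)+1)X − (q−7)` satisfies
`Q((p−3)(q−3)) = −(p−3)(q−3) − q + 7 < 0`, hence has two real roots `α` and `β` with
`β > (p−3)(q−3) > 1` and `|α| < 1/(p−3) ≤ 1`; that is, `Q` is a Pisot polynomial. -/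
theorem variant_splitting_pisot (p q : ℤ) (hp : 4 ≤ p) (hq : 7 < q)
    (Q : ℝ → ℝ)
    (hQ : ∀ x : ℝ, Q x =
      x ^ 2 - (((p : ℝ) - 3) * ((q : ℝ) - 3) + 1) * x - ((q : ℝ) - 7)) :
    Q (((p : ℝ) - 3) * ((q : ℝ) - 3)) = -(((p : ℝ) - 3) * ((q : ℝ) - 3)) - (q : ℝ) + 7 ∧
      Q (((p : ℝ) - 3) * ((q : ℝ) - 3)) < 0 ∧
      (∃ α β : ℝ, (∀ x : ℝ, Q x = (x - α) * (x - β)) ∧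
        ((p : ℝ) - 3) * ((q : ℝ) - 3) < β ∧ |α| < 1 / ((p : ℝ) - 3)) ∧
      1 < ((p : ℝ) - 3) * ((q : ℝ) - 3) ∧ 1 / ((p : ℝ) - 3) ≤ 1 := by
  have hpR : (4 : ℝ) ≤ (p : ℝ) := by exact_mod_cast hp
  have hqR : (7 : ℝ) < (q : ℝ) := by exact_mod_cast hq
  set P : ℝ := (p : ℝ) - 3 with hP
  set Qv : ℝ := (q : ℝ) - 3 with hQv
  have hP1 : (1 : ℝ) ≤ P := by simp [hP]; linarith
  have hQv4 : (4 : ℝ) < Qv := by simp [hQv]; linarith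
  have hc : (0 : ℝ) < (q : ℝ) - 7 := by linarith
  set m : ℝ := P * Qv with hm
  set c : ℝ := (q : ℝ) - 7 with hcdef
  set a : ℝ := m + 1 with ha
  have hm4 : (4 : ℝ) ≤ m := by nlinarith
  have ha0 : (0 : ℝ) < a := by nlinarith
  set D : ℝ := a ^ 2 + 4 * c with hD
  have hD0 : (0 : ℝ) < D := by positivity
  set s : ℝ := Real.sqrt D with hs
  have hs2 : s ^ 2 = a ^ 2 + 4 * c := Real.sq_sqrt hD0.le
  have hs0 : 0 < s := Real.sqrt_pos.mpr hD0
  have hsa : a < s := by nlinarith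
  refine ⟨by rw [hQ]; ring, by rw [hQ]; nlinarith, ⟨(a - s) / 2, (a + s) / 2, ?_, ?_, ?_⟩, by nlinarith, ?_⟩
  · intro x
    rw [hQ x]
    linear_combination (1 / 4 : ℝ) * hs2
  · show m < (a + s) / 2
    nlinarith
  · have hα : (a - s) / 2 < 0 := by nlinarith
    rw [abs_of_neg hα]
    have hP0 : (0 : ℝ) < P := by linarith
    have hre : -((a - s) / 2) = (s - a) / 2 := by ring
    rw [hre, div_lt_div_iff₀ (by norm_num) hP0]
    -- need P * (s - a) < 2, i.e. s < a + 2/P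
    have hcP : c * P < a := by
      have : c = Qv - 4 := by simp [hcdef, hQv]; ring
      rw [this]; nlinarith
    nlinarith [sq_nonneg (s * P - (a * P + 2)), mul_pos hs0 hP0]
  · rw [div_le_one (by linarith)]; exact hP1
end

section
/- For an integer p ≥ 5, the polynomial Q(X) = X² − (2(p−3)+1)X + 2 satisfies Q(2(p−3)) = −2(p−3) + 2 < 0, hence has two real roots α and β with β > 2(p−3) > 1 and 0 < α = 2/β < 1/(p−3) < 1; that is, Q is a Pisot polynomial. -/
/-- For an integer `p ≥ 5`, the polynomial `Q(X) = X² − (2(p−3)+1)X + 2` satisfies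
`Q(2(p−3)) = −2(p−3) + 2 < 0`, hence has two real roots `α` and `β` with
`β > 2(p−3) > 1` and `0 < α = 2/β < 1/(p−3) < 1`; that is, `Q` is a Pisot polynomial. -/
theorem variant_splitting_h_eq_two (p : ℤ) (hp : 5 ≤ p)
    (Q : ℝ → ℝ)
    (hQ : ∀ x : ℝ, Q x = x ^ 2 - (2 * ((p : ℝ) - 3) + 1) * x + 2) :
    Q (2 * ((p : ℝ) - 3)) = -2 * ((p : ℝ) - 3) + 2 ∧
      Q (2 * ((p : ℝ) - 3)) < 0 ∧
      (∃ α β : ℝ, (∀ x : ℝ, Q x = (x - α) * (x - β)) ∧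
        2 * ((p : ℝ) - 3) < β ∧ 0 < α ∧ α = 2 / β ∧ α < 1 / ((p : ℝ) - 3)) ∧
      1 < 2 * ((p : ℝ) - 3) ∧ 1 / ((p : ℝ) - 3) < 1 := by
  have hp' : (5 : ℝ) ≤ (p : ℝ) := by exact_mod_cast hp
  set c : ℝ := (p : ℝ) - 3 with hc
  have hc2 : 2 ≤ c := by linarith
  set b : ℝ := 2 * c + 1 with hb
  have hdisc : (0 : ℝ) ≤ b ^ 2 - 8 := by nlinarith
  set s : ℝ := Real.sqrt (b ^ 2 - 8) with hs
  have hs2 : s ^ 2 = b ^ 2 - 8 := Real.sq_sqrt hdisc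
  have hs0 : 0 ≤ s := Real.sqrt_nonneg _
  have hsb : s < b := by nlinarith
  have hsgt : 2 * c - 1 < s := by nlinarith
  refine ⟨by rw [hQ]; ring, by rw [hQ]; nlinarith, ?_, by linarith, ?_⟩
  · refine ⟨(b - s) / 2, (b + s) / 2, ?_, by linarith, by linarith, ?_, ?_⟩
    · intro x; rw [hQ]; nlinarith [hs2]
    · have hβ : (0 : ℝ) < (b + s) / 2 := by linarith
      field_simp
      rw [eq_div_iff (ne_of_gt (by linarith))]
      nlinarith
    · have hβ : 2 * c < (b + s) / 2 := by linarith
      have hαβ : (b - s) / 2 * ((b + s) / 2) = 2 := by nlinarith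
      have hc0 : 0 < c := by linarith
      rw [div_lt_div_iff₀ (by linarith) hc0] at *
      nlinarith
  · rw [div_lt_one (by linarith)]; linarith
end
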